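/- Let p ∈ (0,1/2), q := 1 − p, and let Z_0, Z_1, Z_2, … be i.i.d. with P(Z_0 = 1) = p and P(Z_0 = −1) = q. Define the reflected random walk (Lindley process) by X_0 := 0 and X_n := max{X_{n−1} + Z_{n−1}, 0} for n ≥ 1, and let τ_0 := inf{k > 0 : X_k = 0}. Then E[τ_0] = q/(q − p). -/

import Mathlib

open MeasureTheory ProbabilityTheory Filter
open scoped ENNReal

set_option linter.unusedSectionVars false
set_option maxHeartbeats 1000000

namespace LindleyAux

variable {Ω : Type*} [MeasurableSpace Ω]

/-- Partial sums of the steps. -/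
def Sp (Z : ℕ → Ω → ℤ) (n : ℕ) (ω : Ω) : ℤ := ∑ i ∈ Finset.range n, Z i ω

/-- The event "the walk stays strictly positive at all times `1, …, n`". -/
def Aset (Z : ℕ → Ω → ℤ) (n : ℕ) : Set Ω := {ω | ∀ k ∈ Finset.Icc 1 n, 0 < Sp Z k ω}

lemma Sp_zero (Z : ℕ → Ω → ℤ) (ω : Ω) : Sp Z 0 ω = 0 := by simp [Sp]

lemma Sp_succ (Z : ℕ → Ω → ℤ) (n : ℕ) (ω : Ω) : Sp Z (n+1) ω = Sp Z n ω + Z n ω := by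
  simp [Sp, Finset.sum_range_succ]

lemma measurable_Sp {Z : ℕ → Ω → ℤ} (h : ∀ n, Measurable (Z n)) (n : ℕ) :
    Measurable (Sp Z n) :=
  Finset.measurable_sum _ fun i _ => h i

lemma measurableSet_Aset {Z : ℕ → Ω → ℤ} (h : ∀ n, Measurable (Z n)) (n : ℕ) :
    MeasurableSet (Aset Z n) := by
  have : Aset Z n = ⋂ k ∈ Finset.Icc 1 n, (Sp Z k) ⁻¹' (Set.Ioi 0) := by
    ext ω; simp [Aset, Set.mem_iInter]
  rw [this]
  exact Finset.measurableSet_biInter _ fun k _ => (measurable_Sp h k) measurableSet_Ioi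

lemma Aset_antitone (Z : ℕ → Ω → ℤ) : Antitone (Aset Z) := by
  intro a b hab ω hω k hk
  exact hω k (Finset.mem_Icc.2 ⟨(Finset.mem_Icc.1 hk).1, le_trans (Finset.mem_Icc.1 hk).2 hab⟩)

lemma mem_Aset_zero (Z : ℕ → Ω → ℤ) (ω : Ω) : ω ∈ Aset Z 0 := by
  intro k hk
  simp at hk

lemma X_eq_Sp {Z X : ℕ → Ω → ℤ} {ω : Ω}
    (hX0 : ∀ ω, X 0 ω = 0) (hXrec : ∀ n ω, X (n + 1) ω = max (X n ω + Z n ω) 0)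
    (n : ℕ) (hpos : ∀ k, 0 < k → k ≤ n → 0 < Sp Z k ω) : X n ω = Sp Z n ω := by
  induction n with
  | zero => rw [hX0, Sp_zero]
  | succ m ih =>
    have hm : X m ω = Sp Z m ω := ih fun k hk hk' => hpos k hk (hk'.trans (Nat.le_succ m))
    rw [hXrec, hm, ← Sp_succ]
    exact max_eq_left (le_of_lt (hpos (m+1) (Nat.succ_pos m) le_rfl))

/-- Pointwise identification of the return time with the sum of survival indicators. -/
lemma tau_eq_tsum {Z X : ℕ → Ω → ℤ} {ω : Ω} {τ₀ : Ω → ℝ≥0∞}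
    (hX0 : ∀ ω, X 0 ω = 0) (hXrec : ∀ n ω, X (n + 1) ω = max (X n ω + Z n ω) 0)
    (hτ₀ : ∀ ω, τ₀ ω = sInf {t : ℝ≥0∞ | ∃ k : ℕ, t = k ∧ 0 < k ∧ X k ω = 0}) :
    τ₀ ω = ∑' m : ℕ, (Aset Z m).indicator (fun _ => (1 : ℝ≥0∞)) ω := by
  rw [hτ₀]
  by_cases hex : ∃ k, 0 < k ∧ Sp Z k ω ≤ 0
  · classical
    let k₀ := Nat.find hex
    obtain ⟨hk₀pos, hk₀le⟩ : 0 < k₀ ∧ Sp Z k₀ ω ≤ 0 := Nat.find_spec hex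
    have hlt : ∀ k, 0 < k → k < k₀ → 0 < Sp Z k ω := by
      intro k hk hkk
      by_contra h
      exact absurd (Nat.find_le ⟨hk, not_lt.1 h⟩) (not_le.2 hkk)
    have hmem : ∀ m : ℕ, ω ∈ Aset Z m ↔ m < k₀ := by
      intro m
      constructor
      · intro hω
        by_contra h
        have := hω k₀ (Finset.mem_Icc.2 ⟨hk₀pos, not_lt.1 h⟩)
        omega
      · intro h k hk
        rw [Finset.mem_Icc] at hk
        exact hlt k hk.1 (lt_of_le_of_lt hk.2 h)
    have htsum : ∑' m : ℕ, (Aset Z m).indicator (fun _ => (1 : ℝ≥0∞)) ω = (k₀ : ℝ≥0∞) := by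
      have h1 : ∀ m : ℕ, (Aset Z m).indicator (fun _ => (1 : ℝ≥0∞)) ω
          = if m < k₀ then 1 else 0 := by
        intro m
        by_cases h : m < k₀
        · simp [Set.indicator_of_mem ((hmem m).2 h), h]
        · simp [Set.indicator_of_notMem (fun hc => h ((hmem m).1 hc)), h]
      rw [tsum_congr h1, tsum_eq_sum (s := Finset.range k₀)
        (fun m hm => by simp [Finset.mem_range.not.1 hm])]
      rw [Finset.sum_congr rfl (fun b hb => if_pos (Finset.mem_range.1 hb))]
      simp
    rw [htsum]
    have hXk₀ : X k₀ ω = 0 := by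
      have h1 : k₀ - 1 + 1 = k₀ := Nat.succ_pred_eq_of_pos hk₀pos
      have hXj : X (k₀ - 1) ω = Sp Z (k₀ - 1) ω :=
        X_eq_Sp hX0 hXrec _ (fun k hk hk' => hlt k hk (by omega))
      have : X (k₀ - 1 + 1) ω = 0 := by
        rw [hXrec, hXj, ← Sp_succ, h1]
        exact max_eq_right hk₀le
      rwa [h1] at this
    apply le_antisymm
    · exact sInf_le ⟨k₀, rfl, hk₀pos, hXk₀⟩
    · apply le_sInf
      rintro t ⟨k, rfl, hk, hXk⟩
      by_contra h
      have hkk₀ : k < k₀ := by exact_mod_cast not_le.1 h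
      have : X k ω = Sp Z k ω :=
        X_eq_Sp hX0 hXrec k (fun j hj hj' => hlt j hj (lt_of_le_of_lt hj' hkk₀))
      have := hlt k hk hkk₀
      omega
  · push_neg at hex
    have hall : ∀ m, ω ∈ Aset Z m := by
      intro m k hk
      rw [Finset.mem_Icc] at hk
      exact hex k hk.1
    have : ∀ m : ℕ, (Aset Z m).indicator (fun _ => (1 : ℝ≥0∞)) ω = 1 := fun m =>
      Set.indicator_of_mem (hall m) _
    rw [tsum_congr this, ENNReal.tsum_const_eq_top_of_ne_zero one_ne_zero]
    have : {t : ℝ≥0∞ | ∃ k : ℕ, t = k ∧ 0 < k ∧ X k ω = 0} = ∅ := by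
      ext t
      simp only [Set.mem_setOf_eq, Set.mem_empty_iff_false, iff_false]
      rintro ⟨k, rfl, hk, hXk⟩
      have : X k ω = Sp Z k ω :=
        X_eq_Sp hX0 hXrec k (fun j hj _ => hex j hj)
      have := hex k hk
      omega
    rw [this, sInf_empty]

lemma sum_coords (Z : ℕ → Ω → ℤ) (m k : ℕ) (hk : k ≤ m) (ω : Ω) :
    ∑ i ∈ Finset.univ.filter (fun i : (Finset.range m : Finset ℕ) => (i : ℕ) < k),
      Z (i : ℕ) ω = Sp Z k ω := by
  classical
  rw [Finset.univ_eq_attach, Finset.sum_filter, Finset.sum_attach (Finset.range m)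
    (fun j => if j < k then Z j ω else 0), ← Finset.sum_filter]
  congr 1
  ext j
  simp only [Finset.mem_filter, Finset.mem_range]
  omega

/-- The survival event up to time `m` is independent of the step at time `m`. -/
lemma indep_key {P : Measure Ω} [IsProbabilityMeasure P] {Z : ℕ → Ω → ℤ}
    (hindep : iIndepFun Z P) (hmeas : ∀ n, Measurable (Z n))
    (m : ℕ) (s : Set ℤ) :
    P (Aset Z m ∩ Z m ⁻¹' s) = P (Aset Z m) * P (Z m ⁻¹' s) := by
  classical
  have hd : Disjoint (Finset.range m) ({m} : Finset ℕ) := by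
    simp [Finset.disjoint_singleton_right]
  have hIF := hindep.indepFun_finset (Finset.range m) {m} hd hmeas
  set MS : Set ((i : (Finset.range m : Finset ℕ)) → ℤ) :=
    {v | ∀ k ∈ Finset.Icc 1 m,
      0 < ∑ i ∈ Finset.univ.filter (fun i : (Finset.range m : Finset ℕ) => (i : ℕ) < k), v i}
    with hMS
  set ts : Set ((i : ({m} : Finset ℕ)) → ℤ) :=
    (fun v => v ⟨m, Finset.mem_singleton_self m⟩) ⁻¹' s with hts
  have hMSm : MeasurableSet MS := by
    have : MS = ⋂ k ∈ Finset.Icc 1 m,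
        (fun v : (i : (Finset.range m : Finset ℕ)) → ℤ =>
          ∑ i ∈ Finset.univ.filter (fun i : (Finset.range m : Finset ℕ) => (i : ℕ) < k), v i)
          ⁻¹' (Set.Ioi 0) := by
      ext v; simp [hMS, Set.mem_iInter]
    rw [this]
    exact MeasurableSet.biInter (Finset.Icc 1 m).countable_toSet fun k _ =>
      (Finset.measurable_sum _ fun i _ => measurable_pi_apply i) measurableSet_Ioi
  have htsm : MeasurableSet ts :=
    (measurable_pi_apply _) (Set.to_countable s).measurableSet
  have h1 : (fun a (i : (Finset.range m : Finset ℕ)) => Z i a) ⁻¹' MS = Aset Z m := by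
    ext ω
    simp only [Set.mem_preimage, hMS, Set.mem_setOf_eq, Aset]
    constructor
    · intro h k hk
      have := h k hk
      rwa [sum_coords Z m k (Finset.mem_Icc.1 hk).2 ω] at this
    · intro h k hk
      rw [sum_coords Z m k (Finset.mem_Icc.1 hk).2 ω]
      exact h k hk
  have h2 : (fun a (i : ({m} : Finset ℕ)) => Z i a) ⁻¹' ts = Z m ⁻¹' s := by
    ext ω; simp [hts]
  have := hIF.measure_inter_preimage_eq_mul MS ts hMSm htsm
  rwa [h1, h2] at this

/-- Abstract analysis fact: for a nonnegative antitone summable sequence, `n * a n → 0`. -/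
lemma tendsto_nat_mul_of_antitone_summable {a : ℕ → ℝ} (hnn : ∀ n, 0 ≤ a n)
    (hant : Antitone a) (hsum : Summable a) :
    Tendsto (fun n : ℕ => (n : ℝ) * a n) atTop (nhds 0) := by
  rw [Metric.tendsto_atTop]
  intro ε hε
  have hcauchy : CauchySeq (fun n => ∑ i ∈ Finset.range n, a i) :=
    hsum.hasSum.tendsto_sum_nat.cauchySeq
  rw [Metric.cauchySeq_iff] at hcauchy
  obtain ⟨N, hN⟩ := hcauchy (ε / 2) (by positivity)
  refine ⟨2 * N + 2, fun n hn => ?_⟩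
  have hj : N ≤ n / 2 := by omega
  have hd := hN n (by omega) (n / 2) hj
  rw [Real.dist_eq] at hd
  have hsub : (∑ i ∈ Finset.range n, a i) - ∑ i ∈ Finset.range (n / 2), a i
      = ∑ i ∈ Finset.Ico (n / 2) n, a i := by
    rw [Finset.sum_Ico_eq_sub _ (by omega)]
  have hcard : ((n - n / 2 : ℕ) : ℝ) * a n ≤ ∑ i ∈ Finset.Ico (n / 2) n, a i := by
    have := Finset.card_nsmul_le_sum (Finset.Ico (n / 2) n) a (a n)
      (fun i hi => hant (le_of_lt (Finset.mem_Ico.1 hi).2))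
    rwa [Nat.card_Ico, nsmul_eq_mul] at this
  have h1 : ∑ i ∈ Finset.Ico (n / 2) n, a i < ε / 2 := by
    calc ∑ i ∈ Finset.Ico (n / 2) n, a i = _ - _ := hsub.symm
    _ ≤ |(∑ i ∈ Finset.range n, a i) - ∑ i ∈ Finset.range (n / 2), a i| := le_abs_self _
    _ < ε / 2 := hd
  have h2 : (n : ℝ) * a n ≤ 2 * (((n - n / 2 : ℕ) : ℝ) * a n) := by
    have hc : (n : ℝ) ≤ 2 * ((n - n / 2 : ℕ) : ℝ) := by
      have : (n : ℕ) ≤ 2 * (n - n / 2) := by omega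
      exact_mod_cast this
    nlinarith [hnn n, mul_le_mul_of_nonneg_right hc (hnn n)]
  have : (n : ℝ) * a n < ε := by nlinarith [hcard, h1]
  rw [Real.dist_eq, sub_zero, abs_of_nonneg (mul_nonneg (Nat.cast_nonneg n) (hnn n))]
  exact this

/-- Pointwise bound `|S_n| ≤ n` for `±1` steps. -/
lemma abs_Sp_le {Z : ℕ → Ω → ℤ} {ω : Ω} (hpm : ∀ j, Z j ω = 1 ∨ Z j ω = -1) (n : ℕ) :
    |Sp Z n ω| ≤ (n : ℤ) := by
  induction n with
  | zero => simp [Sp_zero]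
  | succ m ih =>
    rw [Sp_succ]
    have h1 := abs_add_le (Sp Z m ω) (Z m ω)
    have hz : |Z m ω| ≤ 1 := by rcases hpm m with h | h <;> simp [h]
    push_cast
    linarith

/-- Pointwise decomposition of the stopped sum. -/
lemma St_decomp {Z : ℕ → Ω → ℤ} {ω : Ω} (hpm : ∀ j, Z j ω = 1 ∨ Z j ω = -1) :
    ∀ n, 1 ≤ n →
      ∑ m ∈ Finset.range n, (Aset Z m).indicator (fun ω' => ((Z m ω' : ℤ) : ℝ)) ω
        = (Z 0 ⁻¹' {-1}).indicator (fun _ => (-1 : ℝ)) ω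
          + (Aset Z n).indicator (fun ω' => ((Sp Z n ω' : ℤ) : ℝ)) ω := by
  intro n hn
  induction n, hn using Nat.le_induction with
  | base =>
    rw [Finset.sum_range_one]
    have hA0 : ω ∈ Aset Z 0 := mem_Aset_zero Z ω
    rw [Set.indicator_of_mem hA0]
    have hS1 : Sp Z 1 ω = Z 0 ω := by rw [Sp_succ, Sp_zero, zero_add]
    rcases hpm 0 with h | h
    · have hmem : ω ∈ Aset Z 1 := by
        intro k hk
        rw [Finset.mem_Icc] at hk
        have hk1 : k = 1 := by omega
        rw [hk1, hS1, h]; norm_num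
      have hnmem : ω ∉ Z 0 ⁻¹' {-1} := by
        simp only [Set.mem_preimage, Set.mem_singleton_iff, h]; norm_num
      rw [Set.indicator_of_mem hmem, Set.indicator_of_notMem hnmem, hS1, zero_add]
    · have hnmem : ω ∉ Aset Z 1 := by
        intro hc
        have := hc 1 (by simp)
        rw [hS1, h] at this
        omega
      have hmem : ω ∈ Z 0 ⁻¹' {-1} := by
        simp only [Set.mem_preimage, Set.mem_singleton_iff, h]
      rw [Set.indicator_of_notMem hnmem, Set.indicator_of_mem hmem, h, add_zero]
      norm_num
  | succ n hn ih =>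
    rw [Finset.sum_range_succ, ih, add_assoc]
    congr 1
    by_cases hA1 : ω ∈ Aset Z (n + 1)
    · have hAn : ω ∈ Aset Z n := Aset_antitone Z (Nat.le_succ n) hA1
      rw [Set.indicator_of_mem hA1, Set.indicator_of_mem hAn, Set.indicator_of_mem hAn,
        Sp_succ]
      push_cast
      ring
    · rw [Set.indicator_of_notMem hA1]
      by_cases hAn : ω ∈ Aset Z n
      · rw [Set.indicator_of_mem hAn, Set.indicator_of_mem hAn]
        have hSn : 0 < Sp Z n ω := hAn n (Finset.mem_Icc.2 ⟨hn, le_rfl⟩)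
        have hSn1 : Sp Z (n+1) ω ≤ 0 := by
          by_contra hc
          apply hA1
          intro k hk
          rw [Finset.mem_Icc] at hk
          rcases Nat.lt_or_ge k (n+1) with h' | h'
          · exact hAn k (Finset.mem_Icc.2 ⟨hk.1, by omega⟩)
          · have : k = n + 1 := by omega
            rw [this]
            exact not_le.1 hc
        have hZ : Z n ω = 1 ∨ Z n ω = -1 := hpm n
        have h0 : Sp Z n ω + Z n ω = 0 := by
          rw [Sp_succ] at hSn1
          omega
        exact_mod_cast congrArg (fun z : ℤ => (z : ℝ)) h0
      · rw [Set.indicator_of_notMem hAn, Set.indicator_of_notMem hAn, add_zero]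

end LindleyAux

open LindleyAux

/-- For the Lindley process (reflected simple random walk) driven by
i.i.d. `±1` steps with up-probability `p < 1/2`, the expected first return time to `0`
equals `q / (q - p)`, where `q = 1 - p`. -/
theorem lindley_expected_return_time
    {Ω : Type*} [MeasurableSpace Ω] (P : Measure Ω) [IsProbabilityMeasure P]
    (p q : ℝ) (hp : p ∈ Set.Ioo (0 : ℝ) (1 / 2)) (hq : q = 1 - p)
    (Z : ℕ → Ω → ℤ)
    (hmeas : ∀ n, Measurable (Z n))
    (hindep : iIndepFun Z P)
    (hid : ∀ n, IdentDistrib (Z n) (Z 0) P P)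
    (hup : P {ω | Z 0 ω = 1} = ENNReal.ofReal p)
    (hdown : P {ω | Z 0 ω = -1} = ENNReal.ofReal q)
    (X : ℕ → Ω → ℤ)
    (hX0 : ∀ ω, X 0 ω = 0)
    (hXrec : ∀ n ω, X (n + 1) ω = max (X n ω + Z n ω) 0)
    (τ₀ : Ω → ℝ≥0∞)
    (hτ₀ : ∀ ω, τ₀ ω = sInf {t : ℝ≥0∞ | ∃ k : ℕ, t = k ∧ 0 < k ∧ X k ω = 0}) :
    ∫⁻ ω, τ₀ ω ∂P = ENNReal.ofReal (q / (q - p)) := by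
  obtain ⟨hp0, hp2⟩ := hp
  have hq0 : 0 < q := by rw [hq]; linarith
  have hqp : 0 < q - p := by rw [hq]; linarith
  have hA : ∀ m, MeasurableSet (Aset Z m) := measurableSet_Aset hmeas
  -- step distributions
  have hup' : ∀ m, P (Z m ⁻¹' {1}) = ENNReal.ofReal p := by
    intro m
    rw [(hid m).measure_mem_eq (measurableSet_singleton (1 : ℤ))]
    exact hup
  have hdown' : ∀ m, P (Z m ⁻¹' {-1}) = ENNReal.ofReal q := by
    intro m
    rw [(hid m).measure_mem_eq (measurableSet_singleton (-1 : ℤ))]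
    exact hdown
  -- a.e. the steps are ±1
  have hpm_ae : ∀ᵐ ω ∂P, ∀ j, Z j ω = 1 ∨ Z j ω = -1 := by
    rw [ae_all_iff]
    intro j
    have hdisj : Disjoint (Z j ⁻¹' {1}) (Z j ⁻¹' {-1}) := by
      rw [Set.disjoint_left]
      intro ω h1 h2
      simp only [Set.mem_preimage, Set.mem_singleton_iff] at h1 h2
      omega
    have hm1 : MeasurableSet (Z j ⁻¹' ({1} : Set ℤ)) := hmeas j (measurableSet_singleton _)
    have hm2 : MeasurableSet (Z j ⁻¹' ({-1} : Set ℤ)) := hmeas j (measurableSet_singleton _)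
    have huni : P (Z j ⁻¹' {1} ∪ Z j ⁻¹' {-1}) = 1 := by
      rw [measure_union hdisj hm2, hup' j, hdown' j,
        ← ENNReal.ofReal_add hp0.le hq0.le, hq]
      norm_num
    have hcompl : P ((Z j ⁻¹' {1} ∪ Z j ⁻¹' {-1})ᶜ) = 0 := by
      rw [measure_compl (hm1.union hm2) (measure_ne_top P _), huni, measure_univ]
      simp
    rw [ae_iff]
    refine measure_mono_null ?_ hcompl
    intro ω hω
    simp only [Set.mem_setOf_eq, not_or] at hω
    simp only [Set.mem_compl_iff, Set.mem_union, Set.mem_preimage, Set.mem_singleton_iff,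
      not_or]
    exact hω
  -- notation
  set a : ℕ → ℝ := fun m => (P (Aset Z m)).toReal with ha
  have hann : ∀ m, 0 ≤ a m := fun m => ENNReal.toReal_nonneg
  have haant : Antitone a := fun m n hmn =>
    ENNReal.toReal_mono (measure_ne_top P _) (measure_mono (Aset_antitone Z hmn))
  -- the basic step integrals
  have hint : ∀ m, Integrable (fun ω => (Aset Z m).indicator
      (fun ω' => ((Z m ω' : ℤ) : ℝ)) ω) P ∧
      ∫ ω, (Aset Z m).indicator (fun ω' => ((Z m ω' : ℤ) : ℝ)) ω ∂P = (p - q) * a m := by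
    intro m
    set B1 := Aset Z m ∩ Z m ⁻¹' {1} with hB1
    set B2 := Aset Z m ∩ Z m ⁻¹' {-1} with hB2
    have hB1m : MeasurableSet B1 := (hA m).inter (hmeas m (measurableSet_singleton _))
    have hB2m : MeasurableSet B2 := (hA m).inter (hmeas m (measurableSet_singleton _))
    set g : Ω → ℝ := fun ω => B1.indicator (fun _ => (1 : ℝ)) ω
      + B2.indicator (fun _ => (-1 : ℝ)) ω with hg
    have hgae : g =ᵐ[P] fun ω => (Aset Z m).indicator (fun ω' => ((Z m ω' : ℤ) : ℝ)) ω := by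
      filter_upwards [hpm_ae] with ω hpm
      by_cases hAm : ω ∈ Aset Z m
      · rcases hpm m with h | h
        · have h1 : ω ∈ B1 := ⟨hAm, by simp [Set.mem_preimage, h]⟩
          have h2 : ω ∉ B2 := by
            rintro ⟨-, hc⟩
            simp only [Set.mem_preimage, Set.mem_singleton_iff] at hc
            omega
          simp [hg, Set.indicator_of_mem h1, Set.indicator_of_notMem h2,
            Set.indicator_of_mem hAm, h]
        · have h1 : ω ∉ B1 := by
            rintro ⟨-, hc⟩
            simp only [Set.mem_preimage, Set.mem_singleton_iff] at hc
            omega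
          have h2 : ω ∈ B2 := ⟨hAm, by simp [Set.mem_preimage, h]⟩
          simp [hg, Set.indicator_of_notMem h1, Set.indicator_of_mem h2,
            Set.indicator_of_mem hAm, h]
      · have h1 : ω ∉ B1 := fun hc => hAm hc.1
        have h2 : ω ∉ B2 := fun hc => hAm hc.1
        simp [hg, Set.indicator_of_notMem h1, Set.indicator_of_notMem h2,
          Set.indicator_of_notMem hAm]
    have hgint : Integrable g P :=
      ((integrable_const (1 : ℝ)).indicator hB1m).add
        ((integrable_const (-1 : ℝ)).indicator hB2m)
    have hint1 : Integrable (fun ω => (Aset Z m).indicator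
        (fun ω' => ((Z m ω' : ℤ) : ℝ)) ω) P := hgint.congr hgae
    refine ⟨hint1, ?_⟩
    rw [← integral_congr_ae hgae, hg]
    rw [integral_add ((integrable_const (1 : ℝ)).indicator hB1m)
      ((integrable_const (-1 : ℝ)).indicator hB2m),
      integral_indicator_const (1 : ℝ) hB1m, integral_indicator_const (-1 : ℝ) hB2m]
    have e1 : P B1 = P (Aset Z m) * ENNReal.ofReal p := by
      rw [hB1, indep_key hindep hmeas m, hup' m]
    have e2 : P B2 = P (Aset Z m) * ENNReal.ofReal q := by
      rw [hB2, indep_key hindep hmeas m, hdown' m]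
    rw [measureReal_def, measureReal_def, e1, e2, ENNReal.toReal_mul, ENNReal.toReal_mul,
      ENNReal.toReal_ofReal hp0.le, ENNReal.toReal_ofReal hq0.le]
    simp only [smul_eq_mul, ha]
    ring
  -- integral of the stopped sum
  set e : ℕ → ℝ := fun n => ∑ m ∈ Finset.range n, a m with he
  have hStInt : ∀ n, ∫ ω, (∑ m ∈ Finset.range n,
      (Aset Z m).indicator (fun ω' => ((Z m ω' : ℤ) : ℝ)) ω) ∂P = (p - q) * e n := by
    intro n
    rw [integral_finset_sum _ (fun m _ => (hint m).1),
      Finset.sum_congr rfl (fun m _ => (hint m).2), ← Finset.mul_sum]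
  -- the residual indicator term
  set ind : ℕ → Ω → ℝ :=
    fun n ω => (Aset Z n).indicator (fun ω' => ((Sp Z n ω' : ℤ) : ℝ)) ω with hind
  have hindmeas : ∀ n, Measurable (ind n) := fun n =>
    (measurable_from_top.comp (measurable_Sp hmeas n)).indicator (hA n)
  have hindint : ∀ n, Integrable (ind n) P := by
    intro n
    refine Integrable.mono' (integrable_const ((n : ℝ))) (hindmeas n).aestronglyMeasurable ?_
    filter_upwards [hpm_ae] with ω hpm
    by_cases hmem : ω ∈ Aset Z n
    · rw [hind]
      simp only [Set.indicator_of_mem hmem, Real.norm_eq_abs]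
      have := abs_Sp_le hpm n
      calc |((Sp Z n ω : ℤ) : ℝ)| = ((|Sp Z n ω| : ℤ) : ℝ) := by
            rw [Int.cast_abs]
      _ ≤ ((n : ℤ) : ℝ) := by exact_mod_cast this
      _ = (n : ℝ) := by push_cast; ring
    · rw [hind]
      simp [Set.indicator_of_notMem hmem]
  have hindnn : ∀ n, 1 ≤ n → 0 ≤ ∫ ω, ind n ω ∂P := by
    intro n hn
    refine integral_nonneg fun ω => ?_
    refine Set.indicator_nonneg (fun ω' hω' => ?_) ω
    have : 0 < Sp Z n ω' := hω' n (Finset.mem_Icc.2 ⟨hn, le_rfl⟩)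
    show (0 : ℝ) ≤ ((Sp Z n ω' : ℤ) : ℝ)
    exact_mod_cast this.le
  have hindbd : ∀ n, |∫ ω, ind n ω ∂P| ≤ (n : ℝ) * a n := by
    intro n
    have h1 : |∫ ω, ind n ω ∂P| ≤ ∫ ω, ‖ind n ω‖ ∂P := by
      rw [← Real.norm_eq_abs]
      exact norm_integral_le_integral_norm _
    have h2 : ∫ ω, ‖ind n ω‖ ∂P
        ≤ ∫ ω, (Aset Z n).indicator (fun _ => (n : ℝ)) ω ∂P := by
      refine integral_mono_ae (hindint n).norm
        ((integrable_const ((n : ℝ))).indicator (hA n)) ?_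
      filter_upwards [hpm_ae] with ω hpm
      by_cases hmem : ω ∈ Aset Z n
      · rw [hind]
        simp only [Set.indicator_of_mem hmem, Real.norm_eq_abs]
        have := abs_Sp_le hpm n
        calc |((Sp Z n ω : ℤ) : ℝ)| = ((|Sp Z n ω| : ℤ) : ℝ) := by rw [Int.cast_abs]
        _ ≤ ((n : ℤ) : ℝ) := by exact_mod_cast this
        _ = (n : ℝ) := by push_cast; ring
      · rw [hind]
        simp [Set.indicator_of_notMem hmem]
    have h3 : ∫ ω, (Aset Z n).indicator (fun _ => (n : ℝ)) ω ∂P = (n : ℝ) * a n := by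
      rw [integral_indicator_const ((n : ℝ)) (hA n)]
      simp only [smul_eq_mul, ha, measureReal_def]
      ring
    linarith
  -- the constant term
  have hc0 : ∫ ω, (Z 0 ⁻¹' {-1}).indicator (fun _ => (-1 : ℝ)) ω ∂P = -q := by
    rw [integral_indicator_const ((-1 : ℝ)) (hmeas 0 (measurableSet_singleton _)),
      measureReal_def, hdown' 0, ENNReal.toReal_ofReal hq0.le]
    simp
  -- the key identity
  have hkey : ∀ n, 1 ≤ n → (p - q) * e n = -q + ∫ ω, ind n ω ∂P := by
    intro n hn
    rw [← hStInt n]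
    have hcongr : (fun ω => ∑ m ∈ Finset.range n,
        (Aset Z m).indicator (fun ω' => ((Z m ω' : ℤ) : ℝ)) ω) =ᵐ[P]
        fun ω => (Z 0 ⁻¹' {-1}).indicator (fun _ => (-1 : ℝ)) ω + ind n ω := by
      filter_upwards [hpm_ae] with ω hpm using St_decomp hpm n hn
    rw [integral_congr_ae hcongr,
      integral_add ((integrable_const ((-1 : ℝ))).indicator
        (hmeas 0 (measurableSet_singleton _))) (hindint n), hc0]
  -- partial sums are bounded
  have hebd : ∀ n, ∑ i ∈ Finset.range n, a i ≤ q / (q - p) := by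
    intro n
    rcases Nat.eq_zero_or_pos n with hn | hn
    · rw [hn]
      simp only [Finset.range_zero, Finset.sum_empty]
      positivity
    · have hk := hkey n hn
      have hr := hindnn n hn
      rw [le_div_iff₀ hqp]
      have : e n = ∑ i ∈ Finset.range n, a i := rfl
      nlinarith [hk, hr]
  have hsum : Summable a := summable_of_sum_range_le hann hebd
  set L := ∑' m, a m with hL
  have hetend : Tendsto e atTop (nhds L) := hsum.hasSum.tendsto_sum_nat
  have hrtend : Tendsto (fun n => ∫ ω, ind n ω ∂P) atTop (nhds 0) := by
    refine squeeze_zero_norm (fun n => ?_)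
      (tendsto_nat_mul_of_antitone_summable hann haant hsum)
    rw [Real.norm_eq_abs]
    exact hindbd n
  have h1 : Tendsto (fun n => (p - q) * e n) atTop (nhds ((p - q) * L)) :=
    hetend.const_mul _
  have h2 : Tendsto (fun n => (p - q) * e n) atTop (nhds (-q + 0)) := by
    refine Tendsto.congr' ?_ (tendsto_const_nhds.add hrtend)
    filter_upwards [eventually_ge_atTop 1] with n hn using (hkey n hn).symm
  have hPL : (p - q) * L = -q + 0 := tendsto_nhds_unique h1 h2
  have hLval : L = q / (q - p) := by
    rw [eq_div_iff hqp.ne']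
    linear_combination -hPL
  -- final computation
  calc ∫⁻ ω, τ₀ ω ∂P
      = ∫⁻ ω, ∑' m : ℕ, (Aset Z m).indicator (fun _ => (1 : ℝ≥0∞)) ω ∂P :=
        lintegral_congr fun ω => tau_eq_tsum hX0 hXrec hτ₀
    _ = ∑' m : ℕ, ∫⁻ ω, (Aset Z m).indicator (fun _ => (1 : ℝ≥0∞)) ω ∂P :=
        lintegral_tsum fun m => (measurable_const.indicator (hA m)).aemeasurable
    _ = ∑' m : ℕ, P (Aset Z m) := by
        refine tsum_congr fun m => ?_
        rw [lintegral_indicator (hA m)]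
        simp
    _ = ∑' m : ℕ, ENNReal.ofReal (a m) :=
        tsum_congr fun m => (ENNReal.ofReal_toReal (measure_ne_top P _)).symm
    _ = ENNReal.ofReal L := (ENNReal.ofReal_tsum_of_nonneg hann hsum).symm
    _ = ENNReal.ofReal (q / (q - p)) := by rw [hLval]
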